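/- Let D ∈ {0,1}, let Z* and Z̲ be random vectors with D conditionally independent of Z̲ given Z*, let m(Z*) = P(D = 1 | Z*) satisfy ε < m(Z*) < 1 - ε a.s. for some ε ∈ (0,1/2), let Y be a bounded random variable, and let s(Z̲) be any measurable function of Z̲. Define g₁(Z*, s(Z̲)) = E[Y | D = 1, Z*, s(Z̲)]. Then E[ D·(Y - g₁(Z*, s(Z̲))) / m(Z*) ] = 0 and E[ g₁(Z*, s(Z̲)) ] = E[ E[Y | D = 1, Z*] ]. -/

import Mathlib

open MeasureTheory ProbabilityTheory
open scoped NNReal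

/-- auxiliary: σ-algebra generated by a map (top-level so it is not a local instance). -/
def mSigma {Ω α : Type*} [m : MeasurableSpace α] (f : Ω → α) : MeasurableSpace Ω :=
  MeasurableSpace.comap f m

/-- Generalized augmentation identity: with `D ⊥ Z̲ | Z*`, strict overlap for
`m(Z*) = P(D=1|Z*)`, bounded `Y`, and `g₁(Z*, s(Z̲)) = E[Y | D=1, Z*, s(Z̲)]`
(characterized by `E[D·Y | Z*, s(Z̲)] = g₁(Z*, s(Z̲))·P(D=1 | Z*, s(Z̲))`), one has
`E[D(Y - g₁(Z*, s(Z̲)))/m(Z*)] = 0` and `E[g₁(Z*, s(Z̲))] = E[E[Y | D=1, Z*]]`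
(the latter regression `G₁` characterized by `E[D·Y | Z*] = G₁(Z*)·m(Z*)`). -/
theorem stmt_18 {Ω γ δ κ : Type*} {mΩ : MeasurableSpace Ω} [StandardBorelSpace Ω]
    [MeasurableSpace γ] [MeasurableSpace δ] [MeasurableSpace κ]
    (μ : Measure Ω) [IsProbabilityMeasure μ]
    (D Y : Ω → ℝ) (Zstar : Ω → γ) (Zlow : Ω → δ) (s : δ → κ)
    (mW : γ × κ → ℝ) (g₁ : γ × κ → ℝ) (G₁ mZ : γ → ℝ)
    (hD : ∀ ω, D ω = 0 ∨ D ω = 1)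
    (hDmeas : Measurable D) (hZstar : Measurable Zstar) (hZlow : Measurable Zlow)
    (hs : Measurable s)
    (CY : ℝ) (hYbdd : ∀ ω, |Y ω| ≤ CY) (hYmeas : Measurable Y)
    (hcondindep : CondIndepFun (MeasurableSpace.comap Zstar inferInstance)
      hZstar.comap_le D Zlow μ)
    (ε : ℝ) (hε : ε ∈ Set.Ioo (0 : ℝ) (1 / 2))
    (hoverlap : ∀ᵐ ω ∂μ, ε < mZ (Zstar ω) ∧ mZ (Zstar ω) < 1 - ε)
    (hmZ : μ[D | MeasurableSpace.comap Zstar inferInstance]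
        =ᵐ[μ] fun ω => mZ (Zstar ω))
    (hmW : μ[D | MeasurableSpace.comap (fun ω => (Zstar ω, s (Zlow ω))) inferInstance]
        =ᵐ[μ] fun ω => mW (Zstar ω, s (Zlow ω)))
    (hg₁ : μ[fun ω => D ω * Y ω |
        MeasurableSpace.comap (fun ω => (Zstar ω, s (Zlow ω))) inferInstance]
        =ᵐ[μ] fun ω => g₁ (Zstar ω, s (Zlow ω)) * mW (Zstar ω, s (Zlow ω)))
    (hG₁ : μ[fun ω => D ω * Y ω | MeasurableSpace.comap Zstar inferInstance]
        =ᵐ[μ] fun ω => G₁ (Zstar ω) * mZ (Zstar ω)) :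
    (∫ ω, D ω * (Y ω - g₁ (Zstar ω, s (Zlow ω))) / mZ (Zstar ω) ∂μ) = 0 ∧
      (∫ ω, g₁ (Zstar ω, s (Zlow ω)) ∂μ) = ∫ ω, G₁ (Zstar ω) ∂μ := by
  set W : Ω → γ × κ := fun ω => (Zstar ω, s (Zlow ω)) with hWdef
  have hWmeas : Measurable W := hZstar.prodMk (hs.comp hZlow)
  have h𝓖 : mSigma Zstar ≤ mΩ := hZstar.comap_le
  have h𝓗 : mSigma W ≤ mΩ := hWmeas.comap_le
  have h𝓖𝓗 : mSigma Zstar ≤ mSigma W := by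
    have h1 : Zstar = Prod.fst ∘ W := rfl
    calc mSigma Zstar = MeasurableSpace.comap W (MeasurableSpace.comap Prod.fst inferInstance) := by
          rw [mSigma, h1, ← MeasurableSpace.comap_comp]
      _ ≤ mSigma W := MeasurableSpace.comap_mono measurable_fst.comap_le
  have hmZ : μ[D | mSigma Zstar] =ᵐ[μ] fun ω => mZ (Zstar ω) := hmZ
  have hmW' : μ[D | mSigma W] =ᵐ[μ] fun ω => mW (W ω) := hmW
  have hg₁' : μ[(fun ω => D ω * Y ω) | mSigma W] =ᵐ[μ] fun ω => g₁ (W ω) * mW (W ω) := hg₁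
  have hG₁' : μ[(fun ω => D ω * Y ω) | mSigma Zstar]
      =ᵐ[μ] fun ω => G₁ (Zstar ω) * mZ (Zstar ω) := hG₁
  have hεpos : (0 : ℝ) < ε := hε.1
  -- integrability of D
  have hDb : ∀ ω, |D ω| ≤ 1 := by
    intro ω; rcases hD ω with h | h <;> simp [h]
  have intbdd : ∀ {f : Ω → ℝ} (C : ℝ), AEStronglyMeasurable f μ →
      (∀ᵐ ω ∂μ, |f ω| ≤ C) → Integrable f μ := fun C hm hb =>
    Integrable.mono' (integrable_const C) hm (by simpa [Real.norm_eq_abs] using hb)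
  have hDint : Integrable D μ := intbdd 1 hDmeas.aestronglyMeasurable (.of_forall hDb)
  -- D as indicator
  set T : Set Ω := D ⁻¹' {1} with hTdef
  have hTmeas : MeasurableSet T := hDmeas (measurableSet_singleton 1)
  have hDind : D = T.indicator (fun _ => (1 : ℝ)) := by
    funext ω
    rcases hD ω with h | h
    · have : ω ∉ T := by simp [hTdef, h]
      simp [Set.indicator_of_notMem this, h]
    · have : ω ∈ T := by simp [hTdef, h]
      simp [Set.indicator_of_mem this, h]
  -- conditional independence in condexp form
  have hci := (condIndepFun_iff_condExp_inter_preimage_eq_mul (m' := mSigma Zstar) (hm' := h𝓖)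
    hDmeas hZlow).mp hcondindep
  -- key step: integrals over 𝓗-sets agree
  have keyA : ∀ ⦃c : Set (γ × κ)⦄, MeasurableSet c →
      ∫ ω in W ⁻¹' c, D ω ∂μ = ∫ ω in W ⁻¹' c, (μ[D|mSigma Zstar]) ω ∂μ := by
    refine MeasurableSpace.induction_on_inter
      (C := fun c _ => ∫ ω in W ⁻¹' c, D ω ∂μ = ∫ ω in W ⁻¹' c, (μ[D|mSigma Zstar]) ω ∂μ)
      generateFrom_prod.symm isPiSystem_prod ?_ ?_ ?_ ?_
    · simp
    · rintro c ⟨A, hA, B, hB, rfl⟩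
      have hA' : MeasurableSet A := hA
      have hB' : MeasurableSet B := hB
      set G : Set Ω := Zstar ⁻¹' A with hGdef
      set t : Set Ω := Zlow ⁻¹' (s ⁻¹' B) with htdef
      have hpre : W ⁻¹' (A ×ˢ B) = G ∩ t := by
        ext ω; simp [hGdef, htdef, hWdef, Set.mem_prod]
      have hG𝓖 : MeasurableSet[mSigma Zstar] G := ⟨A, hA', rfl⟩
      have hGm : MeasurableSet G := hZstar hA'
      have htm : MeasurableSet t := hZlow (hs hB')
      set It : Ω → ℝ := t.indicator (fun _ => (1 : ℝ)) with hItdef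
      have hItint : Integrable It μ := by
        refine intbdd 1 ((measurable_const.indicator htm).aestronglyMeasurable)
          (.of_forall fun ω => ?_)
        by_cases h : ω ∈ t <;> simp [hItdef, h]
      set f : Ω → ℝ := μ[D|mSigma Zstar] with hfdef
      have hfm : StronglyMeasurable[mSigma Zstar] f := stronglyMeasurable_condExp
      have hfint : Integrable f μ := integrable_condExp
      have hmul : f * It = t.indicator f := by
        funext ω; by_cases h : ω ∈ t <;> simp [hItdef, h]
      have hfIt : Integrable (f * It) μ := by rw [hmul]; exact hfint.indicator htm
      have hTtint : Integrable ((T ∩ t).indicator (fun _ => (1 : ℝ))) μ := by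
        refine intbdd 1 ((measurable_const.indicator (hTmeas.inter htm)).aestronglyMeasurable)
          (.of_forall fun ω => ?_)
        by_cases h : ω ∈ T ∩ t <;> simp [h]
      have e6 := hci {1} (s ⁻¹' B) (measurableSet_singleton 1) (hs hB')
      have e5 : f =ᵐ[μ] μ[T.indicator (fun _ => (1 : ℝ))|mSigma Zstar] :=
        condExp_congr_ae (Filter.EventuallyEq.of_eq hDind)
      have e4 : μ[f * It|mSigma Zstar] =ᵐ[μ] f * μ[It|mSigma Zstar] :=
        condExp_mul_of_stronglyMeasurable_left hfm hfIt hItint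
      have e1 : ∫ ω in G ∩ t, D ω ∂μ
          = ∫ ω in G, (μ[(T ∩ t).indicator (fun _ => (1 : ℝ))|mSigma Zstar]) ω ∂μ := by
        rw [setIntegral_condExp h𝓖 hTtint hG𝓖, setIntegral_indicator (hTmeas.inter htm), hDind,
          setIntegral_indicator hTmeas, Set.inter_assoc, Set.inter_comm t T]
      have e2 : ∫ ω in G ∩ t, f ω ∂μ = ∫ ω in G, (f * It) ω ∂μ := by
        rw [hmul, setIntegral_indicator htm]
      rw [hpre, e1, e2, ← setIntegral_condExp h𝓖 hfIt hG𝓖]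
      refine setIntegral_congr_ae hGm ?_
      filter_upwards [e4, e5, e6] with ω h4 h5 h6 _
      rw [h6]
      simp only [Pi.mul_apply] at h4 h5 ⊢
      rw [← h5]
      exact h4.symm ▸ (h4.symm ▸ rfl)
    · intro c hcm hc
      have h1 : W ⁻¹' cᶜ = (W ⁻¹' c)ᶜ := rfl
      have h2 := integral_add_compl (hWmeas hcm) hDint
      have h3 := integral_add_compl (hWmeas hcm)
        (integrable_condExp (μ := μ) (m := mSigma Zstar) (f := D))
      rw [h1]
      have h4 : ∫ ω, (μ[D|mSigma Zstar]) ω ∂μ = ∫ ω, D ω ∂μ := integral_condExp h𝓖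
      linarith
    · intro f hdisj hfm hf
      have h1 : W ⁻¹' (⋃ i, f i) = ⋃ i, W ⁻¹' (f i) := by simp [Set.preimage_iUnion]
      have hdisj' : Pairwise (Function.onFun Disjoint fun i => W ⁻¹' (f i)) :=
        fun i j hij => Disjoint.preimage _ (hdisj hij)
      rw [h1, integral_iUnion (fun i => hWmeas (hfm i)) hdisj' hDint.integrableOn,
        integral_iUnion (fun i => hWmeas (hfm i)) hdisj'
          (integrable_condExp (μ := μ) (m := mSigma Zstar) (f := D)).integrableOn]
      exact tsum_congr hf
  -- the two conditional expectations of D agree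
  have hDcond : μ[D|mSigma Zstar] =ᵐ[μ] μ[D|mSigma W] := by
    refine ae_eq_condExp_of_forall_setIntegral_eq h𝓗 hDint
      (fun s hs _ => integrable_condExp.integrableOn)
      (fun s hs _ => ?_)
      ((stronglyMeasurable_condExp.mono h𝓖𝓗).aestronglyMeasurable)
    obtain ⟨c, hc, rfl⟩ := hs
    exact (keyA hc).symm
  -- main abbreviations
  set F : Ω → ℝ := μ[D|mSigma W] with hFdef
  have hFae : F =ᵐ[μ] fun ω => mZ (Zstar ω) := hDcond.symm.trans hmZ
  have hFpos : ∀ᵐ ω ∂μ, ε < F ω := by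
    filter_upwards [hFae, hoverlap] with ω h1 h2
    rw [h1]; exact h2.1
  set EDY : Ω → ℝ := μ[(fun ω => D ω * Y ω)|mSigma W] with hEDYdef
  have hDY : Integrable (fun ω => D ω * Y ω) μ := by
    refine intbdd CY ((hDmeas.mul hYmeas).aestronglyMeasurable) (.of_forall fun ω => ?_)
    calc |D ω * Y ω| = |D ω| * |Y ω| := abs_mul _ _
      _ ≤ 1 * CY := mul_le_mul (hDb ω) (hYbdd ω) (abs_nonneg _) zero_le_one
      _ = CY := one_mul _
  have hEDYb : ∀ᵐ ω ∂μ, |EDY ω| ≤ (CY.toNNReal : ℝ) := by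
    refine ae_bdd_condExp_of_ae_bdd (.of_forall fun ω => ?_)
    calc |D ω * Y ω| = |D ω| * |Y ω| := abs_mul _ _
      _ ≤ 1 * CY := mul_le_mul (hDb ω) (hYbdd ω) (abs_nonneg _) zero_le_one
      _ = CY := one_mul _
      _ ≤ (CY.toNNReal : ℝ) := Real.le_coe_toNNReal CY
  set g' : Ω → ℝ := fun ω => EDY ω / F ω with hg'def
  have hg'sm : StronglyMeasurable[mSigma W] g' :=
    (stronglyMeasurable_condExp.measurable.div stronglyMeasurable_condExp.measurable).stronglyMeasurable
  have hgg' : (fun ω => g₁ (W ω)) =ᵐ[μ] g' := by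
    filter_upwards [hg₁', hmW', hFpos] with ω h1 h2 h3
    have hF0 : F ω ≠ 0 := (hεpos.trans h3).ne'
    rw [hg'def]
    simp only
    rw [h1, ← h2, mul_div_cancel_right₀ _ hF0]
  have hg'b : ∀ᵐ ω ∂μ, |g' ω| ≤ (CY.toNNReal : ℝ) / ε := by
    filter_upwards [hEDYb, hFpos] with ω h1 h2
    have hF0 : 0 < F ω := hεpos.trans h2
    rw [hg'def]
    simp only
    rw [abs_div, abs_of_pos hF0]
    exact div_le_div₀ (CY.toNNReal.coe_nonneg) h1 hεpos h2.le
  have hg'int : Integrable g' μ := intbdd _ ((hg'sm.mono h𝓗).aestronglyMeasurable) hg'b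
  have hgint : Integrable (fun ω => g₁ (W ω)) μ := (integrable_congr hgg').mpr hg'int
  -- the first identity
  set r : Ω → ℝ := fun ω => (F ω)⁻¹ with hrdef
  have hrsm : StronglyMeasurable[mSigma W] r :=
    stronglyMeasurable_condExp.measurable.inv.stronglyMeasurable
  have hrb : ∀ᵐ ω ∂μ, |r ω| ≤ ε⁻¹ := by
    filter_upwards [hFpos] with ω h
    have hF0 : 0 < F ω := hεpos.trans h
    rw [hrdef]
    simp only
    rw [abs_of_pos (inv_pos.mpr hF0)]
    exact inv_anti₀ hεpos h.le
  have hInt1 : Integrable (r * fun ω => D ω * Y ω) μ := by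
    refine intbdd (ε⁻¹ * CY) ((hrsm.mono h𝓗).aestronglyMeasurable.mul
      (hDmeas.mul hYmeas).aestronglyMeasurable) ?_
    filter_upwards [hrb] with ω h1
    simp only [Pi.mul_apply]
    rw [abs_mul]
    refine mul_le_mul h1 ?_ (abs_nonneg _) (inv_nonneg.mpr hεpos.le)
    calc |D ω * Y ω| = |D ω| * |Y ω| := abs_mul _ _
      _ ≤ 1 * CY := mul_le_mul (hDb ω) (hYbdd ω) (abs_nonneg _) zero_le_one
      _ = CY := one_mul _
  have hInt2 : Integrable ((g' * r) * D) μ := by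
    refine intbdd (((CY.toNNReal : ℝ) / ε * ε⁻¹) * 1)
      (((hg'sm.mul hrsm).mono h𝓗).aestronglyMeasurable.mul hDmeas.aestronglyMeasurable) ?_
    filter_upwards [hg'b, hrb] with ω h1 h2
    simp only [Pi.mul_apply]
    rw [abs_mul, abs_mul]
    refine mul_le_mul (mul_le_mul h1 h2 (abs_nonneg _) (div_nonneg
      (CY.toNNReal.coe_nonneg) hεpos.le)) (hDb ω) (abs_nonneg _) ?_
    positivity
  have hpull1 : μ[(r * fun ω => D ω * Y ω)|mSigma W] =ᵐ[μ] r * EDY :=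
    condExp_mul_of_stronglyMeasurable_left hrsm hInt1 hDY
  have hpull2 : μ[((g' * r) * D)|mSigma W] =ᵐ[μ] (g' * r) * F :=
    condExp_mul_of_stronglyMeasurable_left (hg'sm.mul hrsm) hInt2 hDint
  have part1 : (∫ ω, D ω * (Y ω - g₁ (Zstar ω, s (Zlow ω))) / mZ (Zstar ω) ∂μ) = 0 := by
    have hcongr : (fun ω => D ω * (Y ω - g₁ (Zstar ω, s (Zlow ω))) / mZ (Zstar ω)) =ᵐ[μ]
        (fun ω => (r * fun ω => D ω * Y ω) ω - ((g' * r) * D) ω) := by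
      filter_upwards [hgg', hFae] with ω h1 h2
      rw [show g₁ (Zstar ω, s (Zlow ω)) = g₁ (W ω) from rfl, h1, ← h2]
      simp only [Pi.mul_apply, hrdef]
      rw [div_eq_mul_inv]
      ring
    rw [integral_congr_ae hcongr, integral_sub hInt1 hInt2]
    have i1 : ∫ ω, (r * fun ω => D ω * Y ω) ω ∂μ = ∫ ω, (r * EDY) ω ∂μ := by
      rw [← integral_condExp h𝓗 (f := (r * fun ω => D ω * Y ω))]
      exact integral_congr_ae hpull1
    have i2 : ∫ ω, ((g' * r) * D) ω ∂μ = ∫ ω, ((g' * r) * F) ω ∂μ := by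
      rw [← integral_condExp h𝓗 (f := ((g' * r) * D))]
      exact integral_congr_ae hpull2
    have i3 : ∫ ω, (r * EDY) ω ∂μ = ∫ ω, ((g' * r) * F) ω ∂μ := by
      refine integral_congr_ae ?_
      filter_upwards [hFpos] with ω h
      have hF0 : F ω ≠ 0 := (hεpos.trans h).ne'
      simp only [Pi.mul_apply, hg'def, hrdef]
      field_simp
    rw [i1, i2, i3, sub_self]
  -- the second identity
  have tower : μ[(fun ω => D ω * Y ω)|mSigma Zstar] =ᵐ[μ] μ[EDY|mSigma Zstar] :=
    (condExp_condExp_of_le h𝓖𝓗 h𝓗).symm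
  have hEDYg' : EDY =ᵐ[μ] (μ[D|mSigma Zstar]) * g' := by
    filter_upwards [hFpos, hDcond] with ω h1 h2
    have hF0 : F ω ≠ 0 := (hεpos.trans h1).ne'
    simp only [Pi.mul_apply, hg'def]
    rw [show (μ[D|mSigma Zstar]) ω = F ω from h2]
    field_simp
  have hDGb : ∀ᵐ ω ∂μ, |(μ[D|mSigma Zstar]) ω| ≤ ((1 : ℝ≥0) : ℝ) :=
    ae_bdd_condExp_of_ae_bdd (R := 1) (.of_forall fun ω => by simpa using hDb ω)
  have hIntfg' : Integrable ((μ[D|mSigma Zstar]) * g') μ := by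
    refine intbdd (((1 : ℝ≥0) : ℝ) * ((CY.toNNReal : ℝ) / ε))
      ((stronglyMeasurable_condExp.mono h𝓖).aestronglyMeasurable.mul
        (hg'sm.mono h𝓗).aestronglyMeasurable) ?_
    filter_upwards [hDGb, hg'b] with ω h1 h2
    simp only [Pi.mul_apply]
    rw [abs_mul]
    exact mul_le_mul h1 h2 (abs_nonneg _) (by positivity)
  have e9 : μ[((μ[D|mSigma Zstar]) * g')|mSigma Zstar]
      =ᵐ[μ] (μ[D|mSigma Zstar]) * μ[g'|mSigma Zstar] :=
    condExp_mul_of_stronglyMeasurable_left stronglyMeasurable_condExp hIntfg' hg'int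
  have final : (fun ω => G₁ (Zstar ω)) =ᵐ[μ] μ[g'|mSigma Zstar] := by
    have chain : (fun ω => G₁ (Zstar ω) * mZ (Zstar ω)) =ᵐ[μ]
        (μ[D|mSigma Zstar]) * μ[g'|mSigma Zstar] :=
      hG₁'.symm.trans (tower.trans ((condExp_congr_ae hEDYg').trans e9))
    filter_upwards [chain, hmZ, hoverlap] with ω h1 h2 h3
    have hmZ0 : mZ (Zstar ω) ≠ 0 := (hεpos.trans h3.1).ne'
    have : G₁ (Zstar ω) * mZ (Zstar ω) = (μ[g'|mSigma Zstar]) ω * mZ (Zstar ω) := by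
      rw [h1]
      simp only [Pi.mul_apply]
      rw [h2]
      ring
    exact mul_right_cancel₀ hmZ0 this
  have part2 : (∫ ω, g₁ (Zstar ω, s (Zlow ω)) ∂μ) = ∫ ω, G₁ (Zstar ω) ∂μ := by
    calc (∫ ω, g₁ (Zstar ω, s (Zlow ω)) ∂μ) = ∫ ω, g' ω ∂μ := integral_congr_ae hgg'
      _ = ∫ ω, (μ[g'|mSigma Zstar]) ω ∂μ := (integral_condExp h𝓖).symm
      _ = ∫ ω, G₁ (Zstar ω) ∂μ := integral_congr_ae final.symm
  exact ⟨part1, part2⟩
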